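/- Let f_1, …, f_T : R^d → R be differentiable and m-strongly convex with minimizers v_1, …, v_T, in the sense that ∇f_t(x)·(x − v_t) ≥ m‖x − v_t‖² for all x. Let x_1*, …, x_T* minimize Σ_t [f_t(x_t) + (1/2)‖x_t − x_{t−1}‖²] with x_0* fixed equal to v_0 := x_0. Then Σ_{t=1}^T ‖x_t* − v_t‖ ≤ (2/m) Σ_{t=1}^T ‖v_t − v_{t−1}‖. -/

import Mathlib

lemma step_bound {E : Type*} [NormedAddCommGroup E] [InnerProductSpace ℝ E]
    (m : ℝ) (gval xm x xp vm vt vp : E)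
    (hsc : m * ‖x - vt‖ ^ 2 ≤ (inner ℝ gval (x - vt) : ℝ))
    (hfoc : gval + (x - xm) + (x - xp) = 0) :
    m * ‖x - vt‖ ≤ ‖xm - vm‖ - 2 * ‖x - vt‖ + ‖xp - vp‖ + ‖vt - vm‖ + ‖vp - vt‖ := by
  have hg : gval = ((xm - vm) - (x - vt) - (vt - vm)) + ((xp - vp) - (x - vt) + (vp - vt)) := by
    rw [add_assoc] at hfoc
    have := eq_neg_of_add_eq_zero_left hfoc
    rw [this]; abel
  have hid : (inner ℝ gval (x - vt) : ℝ)
      = inner ℝ (xm - vm) (x - vt) + inner ℝ (xp - vp) (x - vt)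
        - 2 * inner ℝ (x - vt) (x - vt) - inner ℝ (vt - vm) (x - vt) + inner ℝ (vp - vt) (x - vt) := by
    rw [hg]
    simp only [inner_add_left, inner_sub_left]
    ring
  have hself : (inner ℝ (x - vt) (x - vt) : ℝ) = ‖x - vt‖ ^ 2 := real_inner_self_eq_norm_sq _
  have h1' := abs_le.mp (abs_real_inner_le_norm (xm - vm) (x - vt))
  have h2' := abs_le.mp (abs_real_inner_le_norm (xp - vp) (x - vt))
  have h3' := abs_le.mp (abs_real_inner_le_norm (vt - vm) (x - vt))
  have h4' := abs_le.mp (abs_real_inner_le_norm (vp - vt) (x - vt))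
  rcases eq_or_lt_of_le (norm_nonneg (x - vt)) with hA | hA
  · rw [← hA]
    have := norm_nonneg (xm - vm); have := norm_nonneg (xp - vp)
    have := norm_nonneg (vt - vm); have := norm_nonneg (vp - vt)
    linarith
  · have key : m * ‖x - vt‖ * ‖x - vt‖
        ≤ (‖xm - vm‖ - 2 * ‖x - vt‖ + ‖xp - vp‖ + ‖vt - vm‖ + ‖vp - vt‖) * ‖x - vt‖ := by
      nlinarith [hsc, hid, hself]
    exact le_of_mul_le_mul_right key hA

/-- Offline movement lemma: the offline optimal points, satisfying the first-order
conditions of the smoothed objective, stay close to the per-round minimizers. -/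
theorem stmt_6 (d T : ℕ) (hT : 1 ≤ T) (m : ℝ) (hm : 0 < m)
    (g : ℕ → EuclideanSpace ℝ (Fin d) → EuclideanSpace ℝ (Fin d))  -- gradients of the fₜ
    (v xstar : ℕ → EuclideanSpace ℝ (Fin d))
    (hsc : ∀ t, 1 ≤ t → t ≤ T → ∀ x, m * ‖x - v t‖ ^ 2 ≤ (inner ℝ (g t x) (x - v t) : ℝ))
    (h0 : xstar 0 = v 0)
    (hfoc : ∀ t, 1 ≤ t → t < T →
      g t (xstar t) + (xstar t - xstar (t - 1)) + (xstar t - xstar (t + 1)) = 0)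
    (hfocT : g T (xstar T) + (xstar T - xstar (T - 1)) = 0) :
    ∑ t ∈ Finset.Icc 1 T, ‖xstar t - v t‖ ≤
      (2 / m) * ∑ t ∈ Finset.Icc 1 T, ‖v t - v (t - 1)‖ := by
  set a : ℕ → ℝ := fun t => ‖xstar t - v t‖ with ha
  set δ : ℕ → ℝ := fun t => ‖v t - v (t - 1)‖ with hδ
  have ha0 : a 0 = 0 := by simp [ha, h0]
  have key : ∀ t, 1 ≤ t → t < T →
      m * a t ≤ a (t - 1) - 2 * a t + a (t + 1) + δ t + ‖v (t + 1) - v t‖ := by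
    intro t ht1 ht2
    exact step_bound m (g t (xstar t)) (xstar (t - 1)) (xstar t) (xstar (t + 1))
      (v (t - 1)) (v t) (v (t + 1)) (hsc t ht1 ht2.le (xstar t)) (hfoc t ht1 ht2)
  have keyT : m * a T ≤ a (T - 1) - a T + δ T := by
    have hfoc' : g T (xstar T) + (xstar T - xstar (T - 1)) + (xstar T - xstar T) = 0 := by
      rw [sub_self, add_zero]; exact hfocT
    have := step_bound m (g T (xstar T)) (xstar (T - 1)) (xstar T) (xstar T)
      (v (T - 1)) (v T) (v T) (hsc T hT le_rfl (xstar T)) hfoc'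
    simp only [sub_self, norm_zero, add_zero] at this
    have : m * a T ≤ a (T - 1) - 2 * a T + a T + δ T := this
    linarith
  -- invariant by induction
  have inv : ∀ n, n ≤ T - 1 →
      m * (∑ t ∈ Finset.Icc 1 n, a t) + a n + a 1
        ≤ a (n + 1) + ∑ t ∈ Finset.Icc 1 n, (δ t + ‖v (t + 1) - v t‖) := by
    intro n
    induction n with
    | zero => intro _; simp [ha0]
    | succ k ih =>
      intro hk
      have hk' : k ≤ T - 1 := by omega
      have hkT : k + 1 < T := by omega
      have ihk := ih hk'
      have st := key (k + 1) (by omega) hkT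
      rw [Finset.sum_Icc_succ_top (by omega : 1 ≤ k + 1),
          Finset.sum_Icc_succ_top (by omega : 1 ≤ k + 1)]
      simp only [Nat.add_sub_cancel] at st
      linarith
  have hT1 : T - 1 + 1 = T := by omega
  have invT := inv (T - 1) le_rfl
  rw [hT1] at invT
  -- bound the shifted delta sum
  have shift : ∀ N : ℕ, ∑ t ∈ Finset.Icc 1 N, ‖v (t + 1) - v t‖
      = ∑ t ∈ Finset.Icc 2 (N + 1), δ t := by
    intro N
    induction N with
    | zero => simp
    | succ k ih =>
      rw [Finset.sum_Icc_succ_top (by omega : 1 ≤ k + 1),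
          Finset.sum_Icc_succ_top (by omega : (2:ℕ) ≤ k + 1 + 1), ih]
      simp [hδ]
  have hδnn : ∀ t ∈ Finset.Icc 1 T, 0 ≤ δ t := fun t _ => norm_nonneg _
  have hsub : ∑ t ∈ Finset.Icc 2 (T - 1 + 1), δ t ≤ ∑ t ∈ Finset.Icc 1 T, δ t := by
    rw [hT1]
    exact Finset.sum_le_sum_of_subset_of_nonneg
      (Finset.Icc_subset_Icc_left (by omega)) (fun t ht _ => norm_nonneg _)
  have hsplit : ∑ t ∈ Finset.Icc 1 (T - 1), (δ t + ‖v (t + 1) - v t‖)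
      ≤ 2 * ∑ t ∈ Finset.Icc 1 T, δ t - δ T := by
    rw [Finset.sum_add_distrib, shift (T - 1)]
    have h1 : ∑ t ∈ Finset.Icc 1 (T - 1), δ t + δ T = ∑ t ∈ Finset.Icc 1 T, δ t := by
      rw [← hT1, Finset.sum_Icc_succ_top (by omega : 1 ≤ T - 1 + 1)]
      simp [hT1]
    linarith [hsub]
  -- combine
  have hmain : m * ∑ t ∈ Finset.Icc 1 T, a t ≤ 2 * ∑ t ∈ Finset.Icc 1 T, δ t := by
    have hsumT : ∑ t ∈ Finset.Icc 1 T, a t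
        = ∑ t ∈ Finset.Icc 1 (T - 1), a t + a T := by
      have h := Finset.sum_Icc_succ_top (by omega : 1 ≤ T - 1 + 1) a
      rw [hT1] at h
      exact h
    have ha1 : 0 ≤ a 1 := norm_nonneg _
    rw [hsumT, mul_add]
    linarith
  have hfin : (∑ t ∈ Finset.Icc 1 T, a t) * m ≤ 2 * ∑ t ∈ Finset.Icc 1 T, δ t := by
    rw [mul_comm]; exact hmain
  rw [div_mul_eq_mul_div, le_div_iff₀ hm]
  exact hfin
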